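/- In the linear regression example, the coefficient on A₁ from the naive regression of Y on (A₁, X₂, A₂) equals −ρ_AX ρ_UX/(1 − ρ_AX²), which is nonzero whenever ρ_AX ≠ 0 and ρ_UX ≠ 0, even though Cov(A₁, Y) = 0. -/

import Mathlib

open Matrix

/-- The naive regression coefficient on A₁ (the first component of
Σ_Z⁻¹ Cov(Z,Y)) equals −ρ_AX ρ_UX/(1−ρ_AX²), is nonzero whenever ρ_AX ≠ 0 and
ρ_UX ≠ 0, even though Cov(A₁, Y) = 0. -/
theorem stmt1 (ρAX ρXA ρUX : ℝ)
    (Sig : Matrix (Fin 4) (Fin 4) ℝ)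
    (hSig : Sig = !![1, ρAX, ρAX * ρXA, 0;
                 ρAX, 1, ρXA, ρUX;
                 ρAX * ρXA, ρXA, 1, ρXA * ρUX;
                 0, ρUX, ρXA * ρUX, 1])
    (hpd : Sig.PosDef)
    (hρ : |ρAX| < 1)
    (SigZ : Matrix (Fin 3) (Fin 3) ℝ)
    (hSigZ : SigZ = Sig.submatrix Fin.castSucc Fin.castSucc)
    (c : Fin 3 → ℝ)
    (hc : c = fun i => Sig (Fin.castSucc i) 3) :
    (SigZ⁻¹ *ᵥ c) 0 = -(ρAX * ρUX) / (1 - ρAX ^ 2) ∧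
    (ρAX ≠ 0 → ρUX ≠ 0 → (SigZ⁻¹ *ᵥ c) 0 ≠ 0) ∧
    Sig 0 3 = 0 := by
  have hAX2 : ρAX ^ 2 < 1 := by
    have := abs_lt.mp hρ
    nlinarith
  have hden : (1 : ℝ) - ρAX ^ 2 ≠ 0 := by nlinarith
  -- ρXA² < 1 from positive definiteness
  have hXA2 : ρXA ^ 2 < 1 := by
    have hx : (![0, ρXA, -1, 0] : Fin 4 → ℝ) ≠ 0 := by
      intro h
      have := congrFun h 2
      change (-1 : ℝ) = 0 at this
      norm_num at this
    have h := hpd.dotProduct_mulVec_pos hx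
    simp only [hSig, dotProduct, mulVec, Fin.sum_univ_four, Pi.star_apply, star_trivial] at h
    norm_num [Matrix.cons_val_zero, Matrix.cons_val_one, Matrix.cons_val_two, Matrix.cons_val_three, Matrix.vecHead, Matrix.vecTail] at h
    nlinarith [h]
  -- explicit SigZ
  have hSZ : SigZ = !![1, ρAX, ρAX * ρXA; ρAX, 1, ρXA; ρAX * ρXA, ρXA, 1] := by
    subst hSig hSigZ
    ext i j
    have e0 : Fin.castSucc (0 : Fin 3) = (0 : Fin 4) := rfl
    have e1 : Fin.castSucc (1 : Fin 3) = (1 : Fin 4) := rfl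
    have e2 : Fin.castSucc (2 : Fin 3) = (2 : Fin 4) := rfl
    fin_cases i <;> fin_cases j <;> simp [Matrix.submatrix, e0, e1, e2]
  have hdet : SigZ.det = (1 - ρAX ^ 2) * (1 - ρXA ^ 2) := by
    rw [hSZ]
    simp [Matrix.det_fin_three]
    ring
  have hdet0 : SigZ.det ≠ 0 := by
    rw [hdet]
    have : (0:ℝ) < 1 - ρXA ^ 2 := by nlinarith
    have : (0:ℝ) < 1 - ρAX ^ 2 := by nlinarith
    positivity
  set v : Fin 3 → ℝ := ![-(ρAX * ρUX) / (1 - ρAX ^ 2), ρUX / (1 - ρAX ^ 2), 0] with hv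
  have hmul : SigZ *ᵥ v = c := by
    subst hSig hc
    rw [hSZ]
    ext i
    have e0 : Fin.castSucc (0 : Fin 3) = (0 : Fin 4) := rfl
    have e1 : Fin.castSucc (1 : Fin 3) = (1 : Fin 4) := rfl
    have e2 : Fin.castSucc (2 : Fin 3) = (2 : Fin 4) := rfl
    fin_cases i <;>
      simp [hv, mulVec, dotProduct, Fin.sum_univ_three, e0, e1, e2] <;>
      field_simp <;> ring
  have hkey : SigZ⁻¹ *ᵥ c = v := by
    rw [← hmul, Matrix.mulVec_mulVec, Matrix.nonsing_inv_mul _ (isUnit_iff_ne_zero.mpr hdet0), Matrix.one_mulVec]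
  refine ⟨?_, ?_, ?_⟩
  · rw [hkey]; simp [hv]
  · intro h1 h2
    rw [hkey]
    simp only [hv, Matrix.cons_val_zero]
    exact div_ne_zero (by simp [h1, h2]) hden
  · simp [hSig]
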